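/- For every i, j ∈ Fin (n+1) with i ≤ j there exists c : Fin (n+1) → R such that, for all k ∈ Fin (n+1), A i k * A j k = ∑_{r ∈ Fin (n+1)} (c r) * (A r k). (Existence of the equivariant structure constants c_{p_i p_j}^{p_k} for H_T^*(ℂP^n) with respect to the canonical classes of the paper's Section 3: the pointwise product of the localized canonical classes lies in the R-span of the localized canonical classes.) -/

import Mathlib

open MvPolynomial
open Fin.NatCast

/-- The auxiliary one-variable polynomial `∏_{m<r} (x - t_m)` with coefficients in
`ℚ[t_0,…,t_n]`. -/
noncomputable def cpnP (n r : ℕ) : Polynomial (MvPolynomial (Fin (n + 1)) ℚ) :=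
  ∏ m ∈ Finset.range r, (Polynomial.X - Polynomial.C (X (m : Fin (n + 1))))

lemma cpnP_monic (n r : ℕ) : (cpnP n r).Monic :=
  Polynomial.monic_prod_of_monic _ _ fun _ _ => Polynomial.monic_X_sub_C _

lemma cpnP_natDegree (n r : ℕ) : (cpnP n r).natDegree = r := by
  rw [cpnP, Polynomial.natDegree_prod_of_monic _ _
    (fun _ _ => Polynomial.monic_X_sub_C _)]
  simp

lemma cpnP_eval (n r : ℕ) (k : Fin (n + 1)) :
    (cpnP n r).eval (X k) = ∏ m ∈ Finset.range r, (X k - X (m : Fin (n + 1))) := by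
  rw [cpnP, Polynomial.eval_prod]
  simp

lemma cpnP_eval_zero (n r : ℕ) (k : Fin (n + 1)) (h : (k : ℕ) < r) :
    (cpnP n r).eval (X k) = 0 := by
  rw [cpnP_eval]
  refine Finset.prod_eq_zero (Finset.mem_range.mpr h) ?_
  rw [Fin.cast_val_eq_self, sub_self]

/-- Key lemma: every polynomial, evaluated at the points `t_0, …, t_n`, agrees with an
`R`-linear combination of the `cpnP n r`, `r ≤ n`, there. -/
lemma cpn_key (n N : ℕ) : ∀ Q : Polynomial (MvPolynomial (Fin (n + 1)) ℚ),
    Q.natDegree ≤ N → ∃ c : Fin (n + 1) → MvPolynomial (Fin (n + 1)) ℚ,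
    ∀ k : Fin (n + 1), Q.eval (X k) = ∑ r : Fin (n + 1), c r * (cpnP n (r : ℕ)).eval (X k) := by
  induction N with
  | zero =>
    intro Q hQ
    have hQ' : Q = Polynomial.C (Q.coeff 0) := Polynomial.eq_C_of_natDegree_le_zero hQ
    refine ⟨fun r => if r = 0 then Q.coeff 0 else 0, fun k => ?_⟩
    rw [hQ']
    simp [cpnP, Finset.sum_ite_eq' Finset.univ (0 : Fin (n + 1))]
  | succ N ih =>
    intro Q hQ
    by_cases hQ0 : Q = 0
    · exact ⟨0, fun k => by simp [hQ0]⟩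
    set d := Q.natDegree with hd
    set m := min d (n + 1) with hm
    have hmd : m ≤ d := Nat.min_le_left _ _
    set a := Q.leadingCoeff with ha
    have ha0 : a ≠ 0 := Polynomial.leadingCoeff_ne_zero.mpr hQ0
    set q : Polynomial (MvPolynomial (Fin (n + 1)) ℚ) :=
      Polynomial.X ^ (d - m) * cpnP n m with hq
    have hqm : q.Monic := (Polynomial.monic_X_pow _).mul (cpnP_monic n m)
    have hqd : q.natDegree = d := by
      rw [hq, (Polynomial.monic_X_pow _).natDegree_mul (cpnP_monic n m),
        Polynomial.natDegree_X_pow, cpnP_natDegree, Nat.sub_add_cancel hmd]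
    set T := Polynomial.C a * q with hT
    have hT0 : T ≠ 0 := by
      rw [hT]
      exact mul_ne_zero (by simpa using ha0) hqm.ne_zero
    have hTdeg : T.natDegree = d := by
      rw [hT, Polynomial.natDegree_C_mul ha0, hqd]
    have hTlc : T.leadingCoeff = a := by
      rw [hT, Polynomial.leadingCoeff_mul, Polynomial.leadingCoeff_C, hqm.leadingCoeff, mul_one]
    have hdeg : (Q - T).degree < Q.degree := by
      refine Polynomial.degree_sub_lt ?_ hQ0 (by rw [hTlc])
      rw [Polynomial.degree_eq_natDegree hQ0, Polynomial.degree_eq_natDegree hT0, hTdeg]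
    have hQT : (Q - T).natDegree ≤ N := by
      by_cases h0 : Q - T = 0
      · simp [h0]
      · have := Polynomial.natDegree_lt_natDegree h0 hdeg
        omega
    obtain ⟨c', hc'⟩ := ih (Q - T) hQT
    have hsplit : ∀ k : Fin (n + 1),
        Q.eval (X k) = (Q - T).eval (X k) + a * ((X k) ^ (d - m) * (cpnP n m).eval (X k)) := by
      intro k
      rw [Polynomial.eval_sub, hT, hq, Polynomial.eval_mul, Polynomial.eval_mul,
        Polynomial.eval_C, Polynomial.eval_pow, Polynomial.eval_X]
      ring
    by_cases hdn : d ≤ n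
    · have hmn : m = d := by omega
      have hdlt : d < n + 1 := by omega
      refine ⟨fun r => c' r + if r = ⟨d, hdlt⟩ then a else 0, fun k => ?_⟩
      rw [hsplit k, hc' k]
      rw [hmn, Nat.sub_self, pow_zero, one_mul]
      rw [Finset.sum_congr rfl (fun r _ => add_mul (c' r) _ _), Finset.sum_add_distrib]
      congr 1
      simp only [ite_mul, zero_mul]
      rw [Finset.sum_ite_eq' Finset.univ (⟨d, hdlt⟩ : Fin (n + 1))
        (fun r => a * Polynomial.eval (X k) (cpnP n (r : ℕ)))]
      simp
    · have hmn : m = n + 1 := by omega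
      refine ⟨c', fun k => ?_⟩
      rw [hsplit k, hc' k, hmn, cpnP_eval_zero n (n + 1) k k.isLt]
      ring

lemma cpn_A_eq (n : ℕ) (A : Fin (n + 1) → Fin (n + 1) → MvPolynomial (Fin (n + 1)) ℚ)
    (hA : ∀ i k : Fin (n + 1),
      A i k = if i ≤ k then ∏ j ∈ Finset.Iio i, (X j - X k) else 0)
    (r k : Fin (n + 1)) :
    A r k = (-1) ^ (r : ℕ) * (cpnP n (r : ℕ)).eval (X k) := by
  rw [hA, cpnP_eval]
  have hprodneg : ∀ (s : Finset ℕ) (g : ℕ → MvPolynomial (Fin (n + 1)) ℚ),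
      ∏ x ∈ s, (-g x) = (-1) ^ s.card * ∏ x ∈ s, g x := by
    intro s g
    rw [Finset.prod_congr rfl (fun x _ => neg_eq_neg_one_mul (g x)),
      Finset.prod_mul_distrib, Finset.prod_const]
  by_cases h : r ≤ k
  · rw [if_pos h]
    have h1 : ∏ j ∈ Finset.Iio r, (X j - X k : MvPolynomial (Fin (n + 1)) ℚ) =
        ∏ x ∈ Finset.range (r : ℕ), (X (x : Fin (n + 1)) - X k) := by
      rw [← Nat.Iio_eq_range]
      rw [← Fin.map_valEmbedding_Iio]
      rw [Finset.prod_map]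
      refine Finset.prod_congr rfl fun j _ => ?_
      simp [Fin.cast_val_eq_self]
    rw [h1]
    have h2 : ∀ x ∈ Finset.range (r : ℕ),
        (X (x : Fin (n + 1)) - X k : MvPolynomial (Fin (n + 1)) ℚ) =
        -(X k - X (x : Fin (n + 1))) := fun x _ => (neg_sub _ _).symm
    rw [Finset.prod_congr rfl h2, hprodneg, Finset.card_range]
  · rw [if_neg h]
    have hk : (k : ℕ) < (r : ℕ) := by
      have := lt_of_not_ge h
      exact this
    rw [Finset.prod_eq_zero (Finset.mem_range.mpr hk) (by rw [Fin.cast_val_eq_self, sub_self]),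
      mul_zero]

theorem cpn_structure_constants_exist
    (n : ℕ) (hn : 1 ≤ n)
    (A : Fin (n + 1) → Fin (n + 1) → MvPolynomial (Fin (n + 1)) ℚ)
    (hA : ∀ i k : Fin (n + 1),
      A i k = if i ≤ k then ∏ j ∈ Finset.Iio i, (X j - X k) else 0)
    (i j : Fin (n + 1)) (hij : i ≤ j) :
    ∃ c : Fin (n + 1) → MvPolynomial (Fin (n + 1)) ℚ,
      ∀ k : Fin (n + 1), A i k * A j k = ∑ r : Fin (n + 1), c r * A r k := by
  obtain ⟨c, hc⟩ := cpn_key n (cpnP n (i : ℕ) * cpnP n (j : ℕ)).natDegree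
    (cpnP n (i : ℕ) * cpnP n (j : ℕ)) le_rfl
  refine ⟨fun r => (-1) ^ ((i : ℕ) + (j : ℕ)) * (-1) ^ (r : ℕ) * c r, fun k => ?_⟩
  rw [cpn_A_eq n A hA i k, cpn_A_eq n A hA j k]
  have h1 : ∀ r : Fin (n + 1),
      ((-1 : MvPolynomial (Fin (n + 1)) ℚ) ^ ((i : ℕ) + (j : ℕ)) * (-1) ^ (r : ℕ) * c r) *
        A r k = (-1) ^ ((i : ℕ) + (j : ℕ)) * (c r * (cpnP n (r : ℕ)).eval (X k)) := by
    intro r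
    rw [cpn_A_eq n A hA r k]
    have : ((-1 : MvPolynomial (Fin (n + 1)) ℚ) ^ (r : ℕ)) * (-1) ^ (r : ℕ) = 1 := by
      rw [← pow_add]
      exact Even.neg_one_pow ⟨(r : ℕ), rfl⟩
    calc ((-1 : MvPolynomial (Fin (n + 1)) ℚ) ^ ((i : ℕ) + (j : ℕ)) * (-1) ^ (r : ℕ) * c r) *
          ((-1) ^ (r : ℕ) * (cpnP n (r : ℕ)).eval (X k))
        = (-1) ^ ((i : ℕ) + (j : ℕ)) * ((-1) ^ (r : ℕ) * (-1) ^ (r : ℕ)) *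
          (c r * (cpnP n (r : ℕ)).eval (X k)) := by ring
      _ = _ := by rw [this]; ring
  rw [Finset.sum_congr rfl (fun r _ => h1 r), ← Finset.mul_sum, ← hc k]
  rw [Polynomial.eval_mul, pow_add]
  ring
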